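/- arXiv:0907.5464 — 2 statements merged into one kernel-verified Lean document; each statement's English description precedes it below -/
import Mathlib

section
/- Let N and K be positive integers, let w_1, …, w_K and h̃ be vectors in ℂ^N, let γ ≥ 0, σ² ≥ 0, δ ≥ 0, fix k ∈ {1, …, K}, and set ε = δ² + 2δ‖h̃‖. If |w_k†h̃|² − γ·Σ_{i≠k} |w_i†h̃|² − ε·( ‖w_k‖² + γ·Σ_{i≠k} ‖w_i‖² ) ≥ σ²γ, then for every h ∈ ℂ^N with ‖h − h̃‖ ≤ δ one has |w_k†h|² ≥ γ·(σ² + Σ_{i≠k} |w_i†h|²); that is, the loosely bounded (LBCS) constraint guarantees the SINR constraint for every channel realization in the uncertainty ball. -/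
open BigOperators Finset

/-- The Euclidean norm of a complex vector. -/
noncomputable def vnorm {N : ℕ} (v : Fin N → ℂ) : ℝ :=
  Real.sqrt (∑ i, ‖v i‖ ^ 2)

/-- The standard inner product `u† v` of two complex vectors. -/
noncomputable def dotc {N : ℕ} (u v : Fin N → ℂ) : ℂ :=
  ∑ i, star (u i) * v i

lemma vnorm_eq_norm {N : ℕ} (v : EuclideanSpace ℂ (Fin N)) :
    vnorm v = ‖v‖ := by
  rw [EuclideanSpace.norm_eq]
  simp [vnorm]

lemma dotc_eq_inner {N : ℕ} (u v : EuclideanSpace ℂ (Fin N)) :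
    dotc u v = @inner ℂ (EuclideanSpace ℂ (Fin N)) _ u v := by
  simp [dotc, PiLp.inner_apply, RCLike.inner_apply]
  exact Finset.sum_congr rfl fun _ _ => mul_comm _ _


lemma vnorm_nonneg {N : ℕ} (v : Fin N → ℂ) : 0 ≤ vnorm v := Real.sqrt_nonneg _

lemma dotc_cs {N : ℕ} (u v : Fin N → ℂ) :
    ‖dotc u v‖ ≤ vnorm u * vnorm v := by
  have h1 := dotc_eq_inner (WithLp.toLp 2 u) (WithLp.toLp 2 v)
  have h2 := vnorm_eq_norm (WithLp.toLp 2 u)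
  have h3 := vnorm_eq_norm (WithLp.toLp 2 v)
  simp only [WithLp.ofLp_toLp] at h1 h2 h3
  rw [h1, h2, h3]
  exact norm_inner_le_norm _ _

lemma dotc_add {N : ℕ} (u a e : Fin N → ℂ) :
    dotc u (a + e) = dotc u a + dotc u e := by
  simp [dotc, mul_add, Finset.sum_add_distrib]

lemma key {N : ℕ} (u a e : Fin N → ℂ) (δ : ℝ) (hδ : 0 ≤ δ) (he : vnorm e ≤ δ) :
    |‖dotc u (a + e)‖ ^ 2 - ‖dotc u a‖ ^ 2|
      ≤ (δ ^ 2 + 2 * δ * vnorm a) * vnorm u ^ 2 := by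
  have hD : ‖dotc u e‖ ≤ vnorm u * δ :=
    (dotc_cs u e).trans (by nlinarith [vnorm_nonneg u])
  have hA : ‖dotc u a‖ ≤ vnorm u * vnorm a := dotc_cs u a
  have htri : |‖dotc u (a + e)‖ - ‖dotc u a‖|
      ≤ ‖dotc u e‖ := by
    rw [dotc_add]
    simpa using abs_norm_sub_norm_le (dotc u a + dotc u e) (dotc u a)
  have h1 := abs_le.mp htri
  have h2 := abs_le.mp (le_refl |‖dotc u (a + e)‖ ^ 2 - ‖dotc u a‖ ^ 2|)
  rw [abs_le]
  constructor <;>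
    nlinarith [norm_nonneg (dotc u (a + e)),
      norm_nonneg (dotc u a), vnorm_nonneg u, vnorm_nonneg a, h1.1, h1.2]

theorem stmt11 (N K : ℕ) (hN : 0 < N) (hK : 0 < K)
    (w : Fin K → Fin N → ℂ) (h' : Fin N → ℂ)
    (γ : ℝ) (hγ : 0 ≤ γ) (σsq : ℝ) (hσ : 0 ≤ σsq) (δ : ℝ) (hδ : 0 ≤ δ)
    (k : Fin K)
    (ε : ℝ) (hε : ε = δ ^ 2 + 2 * δ * vnorm h')
    (hLBCS : ‖dotc (w k) h'‖ ^ 2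
        - γ * ∑ i ∈ Finset.univ.erase k, ‖dotc (w i) h'‖ ^ 2
        - ε * (vnorm (w k) ^ 2 + γ * ∑ i ∈ Finset.univ.erase k, vnorm (w i) ^ 2)
        ≥ σsq * γ) :
    ∀ h : Fin N → ℂ, vnorm (h - h') ≤ δ →
      ‖dotc (w k) h‖ ^ 2 ≥
        γ * (σsq + ∑ i ∈ Finset.univ.erase k, ‖dotc (w i) h‖ ^ 2) := by
  intro h hh
  have hrep : h = h' + (h - h') := by ring
  have hkey : ∀ i : Fin K,
      |‖dotc (w i) h‖ ^ 2 - ‖dotc (w i) h'‖ ^ 2|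
        ≤ ε * vnorm (w i) ^ 2 := by
    intro i
    rw [hε, hrep]
    exact key (w i) h' (h - h') δ hδ hh
  -- sum bound
  have hsum : ∑ i ∈ Finset.univ.erase k, ‖dotc (w i) h‖ ^ 2
      ≤ (∑ i ∈ Finset.univ.erase k, ‖dotc (w i) h'‖ ^ 2)
        + ε * ∑ i ∈ Finset.univ.erase k, vnorm (w i) ^ 2 := by
    rw [Finset.mul_sum, ← Finset.sum_add_distrib]
    refine Finset.sum_le_sum fun i _ => ?_
    have := (abs_le.mp (hkey i)).2
    linarith
  have hk' : ‖dotc (w k) h‖ ^ 2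
      ≥ ‖dotc (w k) h'‖ ^ 2 - ε * vnorm (w k) ^ 2 := by
    have := (abs_le.mp (hkey k)).1
    linarith
  have hγsum := mul_le_mul_of_nonneg_left hsum hγ
  nlinarith [hγsum, hk', hLBCS]
end

section
/- Let N and K be positive integers, let w_1, …, w_K and g̃ be vectors in ℂ^N, let η ≥ 0, κ ≥ 0, and set ξ = η² + 2η‖g̃‖. If Σ_{k=1}^{K} ( |w_k†g̃|² + ξ‖w_k‖² ) ≤ κ, then for every g ∈ ℂ^N with ‖g − g̃‖ ≤ η one has Σ_{k=1}^{K} |w_k†g|² ≤ κ; that is, the deterministic interference-power constraint guarantees the interference-power limit for every channel realization in the uncertainty ball. -/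
open BigOperators Finset

lemma vnorm_eq {N : ℕ} (v : Fin N → ℂ) :
    vnorm v = ‖(WithLp.equiv 2 (Fin N → ℂ)).symm v‖ := by
  rw [vnorm, EuclideanSpace.norm_eq]
  simp

lemma dotc_eq {N : ℕ} (u v : Fin N → ℂ) :
    dotc u v = inner ℂ ((WithLp.equiv 2 (Fin N → ℂ)).symm u)
      ((WithLp.equiv 2 (Fin N → ℂ)).symm v) := by
  rw [dotc, PiLp.inner_apply]
  exact Finset.sum_congr rfl fun i _ => mul_comm _ _

lemma key_s13 {N : ℕ} (u v v' : Fin N → ℂ) (η : ℝ) (hη : 0 ≤ η)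
    (h : vnorm (v - v') ≤ η) :
    ‖dotc u v‖ ^ 2 ≤
      ‖dotc u v'‖ ^ 2 + (η ^ 2 + 2 * η * vnorm v') * vnorm u ^ 2 := by
  set U := (WithLp.equiv 2 (Fin N → ℂ)).symm u
  set V := (WithLp.equiv 2 (Fin N → ℂ)).symm v
  set V' := (WithLp.equiv 2 (Fin N → ℂ)).symm v'
  have hVV' : V - V' = (WithLp.equiv 2 (Fin N → ℂ)).symm (v - v') := rfl
  have h1 : ‖dotc u v‖ ≤ ‖dotc u v'‖ + vnorm u * η := by
    have : dotc u v = dotc u v' + inner ℂ U (V - V') := by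
      rw [dotc_eq u v, dotc_eq u v', ← inner_add_right, add_sub_cancel]
    rw [this]
    calc ‖dotc u v' + inner ℂ U (V - V')‖
        ≤ ‖dotc u v'‖ + ‖inner ℂ U (V - V')‖ :=
          norm_add_le _ _
      _ ≤ ‖dotc u v'‖ + vnorm u * η := by
          gcongr
          calc ‖inner ℂ U (V - V')‖ = ‖(inner ℂ U (V - V') : ℂ)‖ := rfl
            _ ≤ ‖U‖ * ‖V - V'‖ := norm_inner_le_norm _ _
            _ ≤ vnorm u * η := by
                rw [vnorm_eq]
                exact mul_le_mul_of_nonneg_left (by rwa [hVV', ← vnorm_eq])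
                  (norm_nonneg _)
  have h2 : ‖dotc u v'‖ ≤ vnorm u * vnorm v' := by
    rw [dotc_eq, vnorm_eq, vnorm_eq]
    exact norm_inner_le_norm _ _
  have h0 : (0:ℝ) ≤ ‖dotc u v‖ := norm_nonneg _
  have h0' : (0:ℝ) ≤ ‖dotc u v'‖ := norm_nonneg _
  have hu : (0:ℝ) ≤ vnorm u := by rw [vnorm_eq]; exact norm_nonneg _
  nlinarith [mul_le_mul h1 h1 h0 (by positivity),
    mul_le_mul_of_nonneg_left h2 (by positivity : (0:ℝ) ≤ 2 * η * vnorm u)]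

theorem stmt13 (N K : ℕ) (hN : 0 < N) (hK : 0 < K)
    (w : Fin K → Fin N → ℂ) (g' : Fin N → ℂ)
    (η : ℝ) (hη : 0 ≤ η) (κ : ℝ) (hκ : 0 ≤ κ)
    (ξ : ℝ) (hξ : ξ = η ^ 2 + 2 * η * vnorm g')
    (hIP : ∑ k, (‖dotc (w k) g'‖ ^ 2 + ξ * vnorm (w k) ^ 2) ≤ κ) :
    ∀ g : Fin N → ℂ, vnorm (g - g') ≤ η →
      ∑ k, ‖dotc (w k) g‖ ^ 2 ≤ κ := by
  intro g hg
  refine le_trans (Finset.sum_le_sum fun k _ => ?_) hIP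
  rw [hξ]
  exact key_s13 (w k) g g' η hη hg
end
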